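/- Context Irrelevance: for all world evaluation contexts C and C', every redex base rdx, and all global method tables M_g, M_g': (1) ⟨M_g, C[rdx]⟩ → ⟨M_g', C[e']⟩ if and only if ⟨M_g, C'[rdx]⟩ → ⟨M_g', C'[e']⟩; and (2) ⟨M_g, C[rdx]⟩ → error if and only if ⟨M_g, C'[rdx]⟩ → error. -/
import Mathlib


namespace Juliette

/-- Type tags. -/
inductive Tag where
  | unit
  | fn (m : String)
  | int
deriving DecidableEq

/-- Type annotations: tags plus the top annotation `Any`. -/
inductive Ty where
  | any
  | tag (σ : Tag)
deriving DecidableEq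

/-- Values: unit, function values, and base (integer) values. -/
inductive Val where
  | unit
  | fn (m : String)
  | int (n : Int)
deriving DecidableEq

def Val.typeof : Val → Tag
  | .unit => .unit
  | .fn m => .fn m
  | .int _ => .int

/-- Subtyping on annotations: τ <: Any, and tags are subtypes iff equal. -/
def Ty.sub : Ty → Ty → Bool
  | _, .any => true
  | .any, .tag _ => false
  | .tag σ₁, .tag σ₂ => σ₁ == σ₂

/-- Juliette expressions.  A method table is a list of method definitions
    (name, parameters with annotations, body); the head of the list is the
    newest definition. -/
inductive Expr where
  | val (v : Val)
  | var (x : String)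
  | seq (e₁ e₂ : Expr)
  | primCall (δ : String) (args : List Expr)
  | call (f : Expr) (args : List Expr)
  | mdef (m : String) (params : List (String × Ty)) (body : Expr)
  | evalGlobal (e : Expr)
  | evalLocal (tbl : List (String × List (String × Ty) × Expr)) (e : Expr)

/-- Method definitions and method tables. -/
abbrev MDef := String × List (String × Ty) × Expr
abbrev Table := List MDef

def MDef.toExpr (md : MDef) : Expr := .mdef md.1 md.2.1 md.2.2

def MDef.tys (md : MDef) : List Ty := md.2.1.map Prod.snd

-- Method names referenced by an expression.
mutual
def Expr.refs : Expr → List String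
  | .val (.fn m) => [m]
  | .val _ => []
  | .var _ => []
  | .seq e₁ e₂ => e₁.refs ++ e₂.refs
  | .primCall _ es => Expr.refsList es
  | .call f es => f.refs ++ Expr.refsList es
  | .mdef m _ b => m :: b.refs
  | .evalGlobal e => e.refs
  | .evalLocal tbl e => Expr.refsTbl tbl ++ e.refs

def Expr.refsList : List Expr → List String
  | [] => []
  | e :: es => e.refs ++ Expr.refsList es

def Expr.refsTbl : List (String × List (String × Ty) × Expr) → List String
  | [] => []
  | (m, _, b) :: rest => m :: (b.refs ++ Expr.refsTbl rest)
end

-- Substitution of expressions for variables.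
mutual
def Expr.subst (ρ : String → Option Expr) : Expr → Expr
  | .val v => .val v
  | .var x => (ρ x).getD (.var x)
  | .seq e₁ e₂ => .seq (e₁.subst ρ) (e₂.subst ρ)
  | .primCall δ es => .primCall δ (Expr.substList ρ es)
  | .call f es => .call (f.subst ρ) (Expr.substList ρ es)
  | .mdef m ps b =>
      .mdef m ps (b.subst (fun x => if ps.any (fun p => p.1 == x) then none else ρ x))
  | .evalGlobal e => .evalGlobal (e.subst ρ)
  | .evalLocal tbl e => .evalLocal tbl (e.subst ρ)

def Expr.substList (ρ : String → Option Expr) : List Expr → List Expr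
  | [] => []
  | e :: es => e.subst ρ :: Expr.substList ρ es
end
/-- σ̄ <: τ̄ pointwise (with matching lengths). -/
def subTags (σs : List Tag) (τs : List Ty) : Bool :=
  σs.length == τs.length && (σs.zip τs).all (fun p => Ty.sub (.tag p.1) p.2)

def subTys (a b : List Ty) : Bool :=
  a.length == b.length && (a.zip b).all (fun p => p.1.sub p.2)

def tysEquiv (a b : List Ty) : Bool := subTys a b && subTys b a

/-- A newer definition shadows an older one with the same name and
    pairwise-equivalent argument annotations. -/
def shadows (newer older : MDef) : Bool :=
  newer.1 == older.1 && tysEquiv newer.tys older.tys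

/-- Un-shadowed definitions of a table (head is newest). -/
def latest : Table → List MDef
  | [] => []
  | md :: rest => md :: (latest rest).filter (fun md' => !(shadows md md'))

def applicable (mds : List MDef) (m : String) (σs : List Tag) : List MDef :=
  mds.filter (fun md => md.1 == m && subTags σs md.tys)

/-- Method dispatch: the most specific applicable un-shadowed method,
    `none` on dispatch error. -/
def getmd (M : Table) (m : String) (σs : List Tag) : Option MDef :=
  let app := applicable (latest M) m σs
  app.find? (fun md => app.all (fun md' => subTys md.tys md'.tys))

/-- Simple evaluation contexts. -/
inductive SCtx where
  | hole
  | seq (X : SCtx) (e : Expr)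
  | primArg (δ : String) (vs : List Val) (X : SCtx) (es : List Expr)
  | callee (X : SCtx) (es : List Expr)
  | callArg (v : Val) (vs : List Val) (X : SCtx) (es : List Expr)

def SCtx.plug : SCtx → Expr → Expr
  | .hole, e => e
  | .seq X e₂, e => .seq (X.plug e) e₂
  | .primArg δ vs X es, e => .primCall δ (vs.map Expr.val ++ X.plug e :: es)
  | .callee X es, e => .call (X.plug e) es
  | .callArg v vs X es, e => .call (.val v) (vs.map Expr.val ++ X.plug e :: es)

/-- World evaluation contexts: C ::= X | X[⦅C⦆] | X[⟨C⟩_M]. -/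
inductive WCtx where
  | simple (X : SCtx)
  | evalG (X : SCtx) (C : WCtx)
  | evalL (X : SCtx) (M : Table) (C : WCtx)

def WCtx.plug : WCtx → Expr → Expr
  | .simple X, e => X.plug e
  | .evalG X C, e => X.plug (.evalGlobal (C.plug e))
  | .evalL X M C, e => X.plug (.evalLocal M (C.plug e))

/-- Composition of simple contexts: (X₁.comp X₂)[e] = X₁[X₂[e]]. -/
def SCtx.comp : SCtx → SCtx → SCtx
  | .hole, X₂ => X₂
  | .seq X e, X₂ => .seq (X.comp X₂) e
  | .primArg δ vs X es, X₂ => .primArg δ vs (X.comp X₂) es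
  | .callee X es, X₂ => .callee (X.comp X₂) es
  | .callArg v vs X es, X₂ => .callArg v vs (X.comp X₂) es

/-- Wrapping a world context in an outer simple frame: C.under F = F[C]. -/
def WCtx.under : WCtx → SCtx → WCtx
  | .simple X, F => .simple (F.comp X)
  | .evalG X C, F => .evalG (F.comp X) C
  | .evalL X M C, F => .evalL (F.comp X) M C

/-- Composition of world contexts: (C₁.comp C₂)[e] = C₁[C₂[e]]. -/
def WCtx.comp : WCtx → WCtx → WCtx
  | .simple X, C₂ => C₂.under X
  | .evalG X C₁, C₂ => .evalG X (C₁.comp C₂)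
  | .evalL X M C₁, C₂ => .evalL X M (C₁.comp C₂)

/-- A generic function call m(v̄). -/
def mkCall (m : String) (vs : List Val) : Expr := .call (.val (.fn m)) (vs.map Expr.val)

/-- Redex bases. -/
inductive Redex where
  | var (x : String)
  | seqV (v : Val) (e : Expr)
  | primC (δ : String) (vs : List Val)
  | callNonFn (v : Val) (vs : List Val) (h : ∀ m, v ≠ .fn m)
  | mdefR (m : String) (ps : List (String × Ty)) (b : Expr)
  | globalVal (v : Val)
  | localVal (M : Table) (v : Val)
  | globalCall (X : SCtx) (m : String) (vs : List Val)
  | localCall (M : Table) (X : SCtx) (m : String) (vs : List Val)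

def Redex.toExpr : Redex → Expr
  | .var x => .var x
  | .seqV v e => .seq (.val v) e
  | .primC δ vs => .primCall δ (vs.map Expr.val)
  | .callNonFn v vs _ => .call (.val v) (vs.map Expr.val)
  | .mdefR m ps b => .mdef m ps b
  | .globalVal v => .evalGlobal (.val v)
  | .localVal M v => .evalLocal M (.val v)
  | .globalCall X m vs => .evalGlobal (X.plug (mkCall m vs))
  | .localCall M X m vs => .evalLocal M (X.plug (mkCall m vs))

/-- Environment binding formal parameters to argument expressions. -/
def bindArgs (ps : List (String × Ty)) (args : List Expr) : String → Option Expr :=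
  fun x => ((ps.map Prod.fst).zip args).lookup x

/-- The small-step relation ⟨M, e⟩ → ⟨M', e'⟩, parameterized by the
    interpretation Δ of primitive operators. -/
inductive Step (Δ : String → List Val → Option Val) : Table → Expr → Table → Expr → Prop where
  | seqStep (M : Table) (C : WCtx) (v : Val) (e : Expr) :
      Step Δ M (C.plug (.seq (.val v) e)) M (C.plug e)
  | primStep {δ : String} {vs : List Val} {v' : Val} (M : Table) (C : WCtx)
      (h : Δ δ vs = some v') :
      Step Δ M (C.plug (.primCall δ (vs.map Expr.val))) M (C.plug (.val v'))
  | mdefStep (M : Table) (C : WCtx) (m : String) (ps : List (String × Ty)) (b : Expr) :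
      Step Δ M (C.plug (.mdef m ps b)) ((m, ps, b) :: M) (C.plug (.val (.fn m)))
  | callGlobal (M : Table) (C : WCtx) (X : SCtx) (m : String) (vs : List Val) :
      Step Δ M (C.plug (.evalGlobal (X.plug (mkCall m vs)))) M
               (C.plug (.evalGlobal (X.plug (.evalLocal M (mkCall m vs)))))
  | callLocal {M' : Table} {m : String} {vs : List Val} {md : MDef}
      (M : Table) (C : WCtx) (X : SCtx)
      (h : getmd M' m (vs.map Val.typeof) = some md) :
      Step Δ M (C.plug (.evalLocal M' (X.plug (mkCall m vs)))) M
               (C.plug (.evalLocal M' (X.plug (md.2.2.subst (bindArgs md.2.1 (vs.map Expr.val))))))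
  | valGlobal (M : Table) (C : WCtx) (v : Val) :
      Step Δ M (C.plug (.evalGlobal (.val v))) M (C.plug (.val v))
  | valLocal (M M' : Table) (C : WCtx) (v : Val) :
      Step Δ M (C.plug (.evalLocal M' (.val v))) M (C.plug (.val v))

/-- The error step ⟨M, e⟩ → error. -/
inductive StepErr (Δ : String → List Val → Option Val) : Table → Expr → Prop where
  | varErr (M : Table) (C : WCtx) (x : String) :
      StepErr Δ M (C.plug (.var x))
  | primErr {δ : String} {vs : List Val} (M : Table) (C : WCtx)
      (h : Δ δ vs = none) :
      StepErr Δ M (C.plug (.primCall δ (vs.map Expr.val)))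
  | calleeErr {v : Val} (M : Table) (C : WCtx) (vs : List Val)
      (h : ∀ m, v ≠ Val.fn m) :
      StepErr Δ M (C.plug (.call (.val v) (vs.map Expr.val)))
  | callErr {M' : Table} {m : String} {vs : List Val} (M : Table) (C : WCtx) (X : SCtx)
      (h : getmd M' m (vs.map Val.typeof) = none) :
      StepErr Δ M (C.plug (.evalLocal M' (X.plug (mkCall m vs))))

/-- Reflexive-transitive closure of the small-step relation. -/
inductive Steps (Δ : String → List Val → Option Val) : Table → Expr → Table → Expr → Prop where
  | refl (M : Table) (e : Expr) : Steps Δ M e M e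
  | tail {M e M' e' M'' e''} : Steps Δ M e M' e' → Step Δ M' e' M'' e'' → Steps Δ M e M'' e''
/-- Canonical representations. -/
inductive Rep where
  | V (v : Val)
  | X (X : SCtx)
  | C (C : WCtx)

/-- The canonical-form judgment Can(e, rep). -/
inductive Can : Expr → Rep → Prop where
  | val (v : Val) : Can (.val v) (.V v)
  | call (m : String) (vs : List Val) : Can (mkCall m vs) (.X .hole)
  | redex (r : Redex) : Can r.toExpr (.C (.simple .hole))
  | seqX {e₁ : Expr} {X₁ : SCtx} (e₂ : Expr) :
      Can e₁ (.X X₁) → Can (.seq e₁ e₂) (.X (.seq X₁ e₂))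
  | primX {eᵢ : Expr} {Xᵢ : SCtx} (δ : String) (vs : List Val) (es : List Expr) :
      Can eᵢ (.X Xᵢ) →
      Can (.primCall δ (vs.map Expr.val ++ eᵢ :: es)) (.X (.primArg δ vs Xᵢ es))
  | calleeX {e_c : Expr} {X_c : SCtx} (es : List Expr) :
      Can e_c (.X X_c) → Can (.call e_c es) (.X (.callee X_c es))
  | callX {eᵢ : Expr} {Xᵢ : SCtx} (m : String) (vs : List Val) (es : List Expr) :
      Can eᵢ (.X Xᵢ) →
      Can (.call (.val (.fn m)) (vs.map Expr.val ++ eᵢ :: es))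
          (.X (.callArg (.fn m) vs Xᵢ es))
  | seqC {e₁ : Expr} {C₁ : WCtx} (e₂ : Expr) :
      Can e₁ (.C C₁) → Can (.seq e₁ e₂) (.C (C₁.under (.seq .hole e₂)))
  | primC {eᵢ : Expr} {Cᵢ : WCtx} (δ : String) (vs : List Val) (es : List Expr) :
      Can eᵢ (.C Cᵢ) →
      Can (.primCall δ (vs.map Expr.val ++ eᵢ :: es)) (.C (Cᵢ.under (.primArg δ vs .hole es)))
  | calleeC {e_c : Expr} {C_c : WCtx} (es : List Expr) :
      Can e_c (.C C_c) → Can (.call e_c es) (.C (C_c.under (.callee .hole es)))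
  | callC {eᵢ : Expr} {Cᵢ : WCtx} (m : String) (vs : List Val) (es : List Expr) :
      Can eᵢ (.C Cᵢ) →
      Can (.call (.val (.fn m)) (vs.map Expr.val ++ eᵢ :: es))
          (.C (Cᵢ.under (.callArg (.fn m) vs .hole es)))
  | evalGC {e : Expr} {C : WCtx} :
      Can e (.C C) → Can (.evalGlobal e) (.C (.evalG .hole C))
  | evalLC {e : Expr} {C : WCtx} (M : Table) :
      Can e (.C C) → Can (.evalLocal M e) (.C (.evalL .hole M C))
/-- Typing environments map variables to type annotations. -/
abbrev TyEnv := String → Option Ty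

def emptyEnv : TyEnv := fun _ => none

/-- Concrete typing Γ ⊢ e : σ, parameterized by the return-tag function Δτ
    of primitive operators. -/
inductive HasTy (Δτ : String → List Tag → Option Tag) : TyEnv → Expr → Tag → Prop where
  | var {Γ : TyEnv} {x : String} {σ : Tag} :
      Γ x = some (.tag σ) → HasTy Δτ Γ (.var x) σ
  | val {Γ : TyEnv} (v : Val) : HasTy Δτ Γ (.val v) v.typeof
  | mdefTy {Γ : TyEnv} (m : String) (ps : List (String × Ty)) (b : Expr) :
      HasTy Δτ Γ (.mdef m ps b) (.fn m)
  | seq {Γ : TyEnv} {e₂ : Expr} {σ : Tag} (e₁ : Expr) :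
      HasTy Δτ Γ e₂ σ → HasTy Δτ Γ (.seq e₁ e₂) σ
  | primop {Γ : TyEnv} {δ : String} {es : List Expr} {σs : List Tag} {σ' : Tag} :
      es.length = σs.length →
      (∀ p ∈ es.zip σs, HasTy Δτ Γ p.1 p.2) →
      Δτ δ σs = some σ' →
      HasTy Δτ Γ (.primCall δ es) σ'
  | evalG {Γ : TyEnv} {e : Expr} {σ : Tag} :
      HasTy Δτ Γ e σ → HasTy Δτ Γ (.evalGlobal e) σ
  | evalL {Γ : TyEnv} {e : Expr} {σ : Tag} (M : Table) :
      HasTy Δτ Γ e σ → HasTy Δτ Γ (.evalLocal M e) σ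

/-- Δτ agrees with Δ: the tag of a primop's result is given by Δτ. -/
def Agrees (Δ : String → List Val → Option Val)
    (Δτ : String → List Tag → Option Tag) : Prop :=
  ∀ δ vs v', Δ δ vs = some v' → Δτ δ (vs.map Val.typeof) = some v'.typeof

/-- m is the name of some method defined in M. -/
def nameInTable (m : String) (M : Table) : Prop := ∃ md ∈ M, md.1 = m

/-- m occurs in M: either as a defined name or referenced in some body. -/
def occursInTable (m : String) (M : Table) : Prop :=
  ∃ md ∈ M, md.1 = m ∨ m ∈ Expr.refs md.2.2

/-- Every method name referenced by e occurs in M iff it occurs in M'. -/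
def compat (e : Expr) (M M' : Table) : Prop :=
  ∀ m ∈ e.refs, (nameInTable m M ↔ nameInTable m M')

/-- Method-optimization environments: entries m[σ̄] ≡ m'. -/
abbrev OptEnv := List (String × List Tag × String)

/-- Near-values: values or variables. -/
inductive NearVal where
  | val (v : Val)
  | var (x : String)

def NearVal.toExpr : NearVal → Expr
  | .val v => .val v
  | .var x => .var x

/-- Typing environment x̄ : τ̄ from a parameter list. -/
def paramEnv (ps : List (String × Ty)) : TyEnv := fun x => ps.lookup x

/-- Typing environment x̄ : σ̄ binding parameter names to tags. -/
def tagEnv (ps : List (String × Ty)) (σs : List Tag) : TyEnv :=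
  fun x => ((ps.map Prod.fst).zip (σs.map Ty.tag)).lookup x

/-- Renaming substitution [x̄' := x̄] from the parameters of one definition
    to those of another. -/
def renameEnv (fromPs toPs : List (String × Ty)) : String → Option Expr :=
  fun x => ((fromPs.map Prod.fst).zip ((toPs.map Prod.fst).map Expr.var)).lookup x

/-- Expression optimization Φ; Γ ⊢ M, e ↝ M', e'. -/
inductive Opt (Δτ : String → List Tag → Option Tag) (Φ : OptEnv) (M M' : Table) :
    TyEnv → Expr → Expr → Prop where
  | valNonFn {Γ : TyEnv} {v : Val} (h : ∀ m, v ≠ Val.fn m) :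
      Opt Δτ Φ M M' Γ (.val v) (.val v)
  | valFn {Γ : TyEnv} (m : String) (h : compat (.val (.fn m)) M M') :
      Opt Δτ Φ M M' Γ (.val (.fn m)) (.val (.fn m))
  | var {Γ : TyEnv} (x : String) : Opt Δτ Φ M M' Γ (.var x) (.var x)
  | evalG {Γ : TyEnv} (e : Expr) (h : compat e M M') :
      Opt Δτ Φ M M' Γ (.evalGlobal e) (.evalGlobal e)
  | evalL {Γ : TyEnv} (Ml : Table) (e : Expr) (h : compat e M M') :
      Opt Δτ Φ M M' Γ (.evalLocal Ml e) (.evalLocal Ml e)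
  | mdefO {Γ : TyEnv} (m : String) (ps : List (String × Ty)) (b : Expr)
      (h : compat (.val (.fn m)) M M') :
      Opt Δτ Φ M M' Γ (.mdef m ps b) (.mdef m ps b)
  | seq {Γ : TyEnv} {e₁ e₁' e₂ e₂' : Expr} :
      Opt Δτ Φ M M' Γ e₁ e₁' → Opt Δτ Φ M M' Γ e₂ e₂' →
      Opt Δτ Φ M M' Γ (.seq e₁ e₂) (.seq e₁' e₂')
  | primop {Γ : TyEnv} {es es' : List Expr} (δ : String) :
      es.length = es'.length →
      (∀ p ∈ es.zip es', Opt Δτ Φ M M' Γ p.1 p.2) →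
      Opt Δτ Φ M M' Γ (.primCall δ es) (.primCall δ es')
  | call {Γ : TyEnv} {e_c e_c' : Expr} {es es' : List Expr} :
      Opt Δτ Φ M M' Γ e_c e_c' →
      es.length = es'.length →
      (∀ p ∈ es.zip es', Opt Δτ Φ M M' Γ p.1 p.2) →
      Opt Δτ Φ M M' Γ (.call e_c es) (.call e_c' es')
  | inline {Γ : TyEnv} {m : String} {νs : List NearVal} {σs : List Tag}
      {md : MDef} {e' : Expr} :
      νs.length = σs.length →
      (∀ p ∈ νs.zip σs, HasTy Δτ Γ p.1.toExpr p.2) →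
      getmd M m σs = some md →
      Opt Δτ Φ M M' Γ (md.2.2.subst (bindArgs md.2.1 (νs.map NearVal.toExpr))) e' →
      Opt Δτ Φ M M' Γ (.call (.val (.fn m)) (νs.map NearVal.toExpr))
                      (.seq (.val .unit) e')
  | direct {Γ : TyEnv} {m m' : String} {es es' : List Expr} {σs : List Tag} :
      es.length = es'.length →
      es'.length = σs.length →
      (∀ p ∈ es.zip es', Opt Δτ Φ M M' Γ p.1 p.2) →
      (∀ p ∈ es'.zip σs, HasTy Δτ Γ p.1 p.2) →
      (m, σs, m') ∈ Φ →
      Opt Δτ Φ M M' Γ (.call (.val (.fn m)) es) (.call (.val (.fn m')) es')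

/-- md' optimizes md under (Φ, M, M'): same name and annotations, and the
    new body (with parameters renamed back) optimizes the old body. -/
def mdOpt (Δτ : String → List Tag → Option Tag) (Φ : OptEnv) (M M' : Table)
    (md md' : MDef) : Prop :=
  md'.1 = md.1 ∧ md'.tys = md.tys ∧ md.2.1.length = md'.2.1.length ∧
  Opt Δτ Φ M M' (paramEnv md.2.1) md.2.2 (md'.2.2.subst (renameEnv md'.2.1 md.2.1))

/-- Validity of an entry m[σ̄] ≡ m' of Φ for (Φ, M, M'). -/
def validEntry (Δτ : String → List Tag → Option Tag) (Φ : OptEnv) (M M' : Table)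
    (ent : String × List Tag × String) : Prop :=
  ∃ md md' : MDef,
    getmd M ent.1 ent.2.1 = some md ∧
    getmd M' ent.2.2 ent.2.1 = some md' ∧
    md.2.1.length = md'.2.1.length ∧
    Opt Δτ Φ M M' (tagEnv md.2.1 ent.2.1) md.2.2 (md'.2.2.subst (renameEnv md'.2.1 md.2.1))

/-- Table optimization Φ ⊢ M ↝ M'. -/
def TableOpt (Δτ : String → List Tag → Option Tag) (Φ : OptEnv) (M M' : Table) : Prop :=
  ∃ extra opts : Table,
    M' = extra ++ opts ∧
    List.Forall₂ (mdOpt Δτ Φ M M') M opts ∧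
    (∀ ent ∈ Φ, validEntry Δτ Φ M M' ent) ∧
    (∀ md ∈ extra, ¬ occursInTable md.1 M)

/-- Φ ⊢ e : M ↝ M'. -/
def TableOptE (Δτ : String → List Tag → Option Tag) (Φ : OptEnv) (e : Expr)
    (M M' : Table) : Prop :=
  TableOpt Δτ Φ M M' ∧ compat e M M'

/-- Γ ⊢ γ ok for a value substitution γ. -/
def substOk (Γ : TyEnv) (γ : String → Option Val) : Prop :=
  (∀ x, (Γ x).isSome ↔ (γ x).isSome) ∧
  (∀ x σ, Γ x = some (Ty.tag σ) ↔ ∃ v, γ x = some v ∧ v.typeof = σ)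

/-- Application of a value substitution to an expression. -/
def applySubst (γ : String → Option Val) (e : Expr) : Expr :=
  e.subst (fun x => (γ x).map Expr.val)
/-! ### Auxiliary lemmas for context irrelevance -/

/-- Atoms: expressions that can sit at the hole of a simple context in a
    decomposition (head shapes plus boxes plus generic function calls). -/
def Atom : Expr → Prop
  | .var _ => True
  | .seq e₁ _ => ∃ v, e₁ = .val v
  | .primCall _ es => ∃ vs : List Val, es = vs.map Expr.val
  | .call f es => (∃ v, f = .val v) ∧ ∃ vs : List Val, es = vs.map Expr.val
  | .mdef _ _ _ => True
  | .evalGlobal _ => True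
  | .evalLocal _ _ => True
  | .val _ => False

/-- Head shapes: the redex shapes appearing in the step rules. -/
def Head : Expr → Prop
  | .var _ => True
  | .seq e₁ _ => ∃ v, e₁ = .val v
  | .primCall _ es => ∃ vs : List Val, es = vs.map Expr.val
  | .call f es => (∃ v, f = .val v ∧ ∀ m, v ≠ .fn m) ∧ ∃ vs : List Val, es = vs.map Expr.val
  | .mdef _ _ _ => True
  | .evalGlobal e => (∃ v, e = .val v) ∨ ∃ X m vs, e = SCtx.plug X (mkCall m vs)
  | .evalLocal _ e => (∃ v, e = .val v) ∨ ∃ X m vs, e = SCtx.plug X (mkCall m vs)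
  | .val _ => False

lemma head_atom {e : Expr} (h : Head e) : Atom e := by
  cases e with
  | call f es =>
    obtain ⟨⟨v, hv, _⟩, h2⟩ := h
    exact ⟨⟨v, hv⟩, h2⟩
  | val v => exact h
  | var x => trivial
  | seq e₁ e₂ => exact h
  | primCall δ es => exact h
  | mdef m ps b => trivial
  | evalGlobal e => trivial
  | evalLocal M e => trivial

lemma atom_mkCall (m : String) (vs : List Val) : Atom (mkCall m vs) :=
  ⟨⟨.fn m, rfl⟩, vs, rfl⟩

lemma atom_nv {a : Expr} (ha : Atom a) : ∀ v, a ≠ .val v := by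
  intro v h; subst h; simp [Atom] at ha

lemma head_nv {a : Expr} (ha : Head a) : ∀ v, a ≠ .val v := by
  intro v h; subst h; simp [Head] at ha

lemma splug_val {X : SCtx} {e : Expr} {v : Val}
    (h : X.plug e = .val v) : X = .hole ∧ e = .val v := by
  cases X <;> simp [SCtx.plug] at h
  exact ⟨rfl, h⟩

lemma plug_atom_nv {a : Expr} (ha : Atom a) (X : SCtx) :
    ∀ v, X.plug a ≠ .val v := by
  intro v h
  obtain ⟨_, he⟩ := splug_val h
  exact atom_nv ha v he

lemma wplug_val {C : WCtx} {e : Expr} {v : Val}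
    (h : C.plug e = .val v) : C = .simple .hole ∧ e = .val v := by
  cases C with
  | simple X =>
    obtain ⟨h1, h2⟩ := splug_val h; subst h1; exact ⟨rfl, h2⟩
  | evalG X Ci => obtain ⟨_, h2⟩ := splug_val h; simp at h2
  | evalL X M Ci => obtain ⟨_, h2⟩ := splug_val h; simp at h2

lemma not_val_in_map {ws vs : List Val} {x : Expr} {es : List Expr}
    (hx : ∀ v, x ≠ Expr.val v) :
    ws.map Expr.val ≠ vs.map Expr.val ++ x :: es := by
  intro h
  have hmem : x ∈ ws.map Expr.val := by rw [h]; simp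
  obtain ⟨v, _, hv⟩ := List.mem_map.1 hmem
  exact hx v hv.symm

lemma vals_split : ∀ (vs vs' : List Val) (x x' : Expr) (es es' : List Expr),
    (∀ v, x ≠ Expr.val v) → (∀ v, x' ≠ Expr.val v) →
    vs.map Expr.val ++ x :: es = vs'.map Expr.val ++ x' :: es' →
    vs = vs' ∧ x = x' ∧ es = es' := by
  intro vs
  induction vs with
  | nil =>
    intro vs' x x' es es' hx hx' h
    cases vs' with
    | nil => simpa using h
    | cons w ws => simp at h; exact absurd h.1 (hx w)
  | cons v vs ih =>
    intro vs' x x' es es' hx hx' h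
    cases vs' with
    | nil => simp at h; exact absurd h.1.symm (hx' v)
    | cons w ws =>
      simp only [List.map_cons, List.cons_append, List.cons.injEq] at h
      obtain ⟨hv, hrest⟩ := h
      have hv' : v = w := by injection hv
      obtain ⟨h1, h2, h3⟩ := ih ws x x' es es' hx hx' hrest
      exact ⟨by rw [hv', h1], h2, h3⟩

/-- If an atom equals a simple context plugged with an atom, the context is
    the hole. -/
lemma atom_plug_eq {a a' : Expr} {X : SCtx} (ha : Atom a) (ha' : Atom a')
    (h : a = X.plug a') : X = .hole ∧ a = a' := by
  cases X with
  | hole => exact ⟨rfl, h⟩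
  | seq Y e₂ =>
    exfalso; rw [SCtx.plug] at h; subst h
    obtain ⟨v, hv⟩ := ha
    exact plug_atom_nv ha' Y v hv
  | primArg δ vs Y es =>
    exfalso; rw [SCtx.plug] at h; subst h
    obtain ⟨ws, hws⟩ := ha
    exact not_val_in_map (plug_atom_nv ha' Y) hws.symm
  | callee Y es =>
    exfalso; rw [SCtx.plug] at h; subst h
    obtain ⟨⟨v, hv⟩, _⟩ := ha
    exact plug_atom_nv ha' Y v hv
  | callArg v vs Y es =>
    exfalso; rw [SCtx.plug] at h; subst h
    obtain ⟨_, ws, hws⟩ := ha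
    exact not_val_in_map (plug_atom_nv ha' Y) hws.symm

/-- Unique decomposition for simple contexts and atoms. -/
lemma atom_unique : ∀ (X X' : SCtx) (a a' : Expr), Atom a → Atom a' →
    X.plug a = X'.plug a' → X = X' ∧ a = a' := by
  intro X
  induction X with
  | hole =>
    intro X' a a' ha ha' h
    obtain ⟨h1, h2⟩ := atom_plug_eq ha ha' h
    exact ⟨h1.symm, h2⟩
  | seq X₁ e ih =>
    intro X' a a' ha ha' h
    cases X' with
    | hole =>
      obtain ⟨h1, h2⟩ := atom_plug_eq ha' ha h.symm
      exact absurd h1 (by simp)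
    | seq Y e₂ =>
      simp only [SCtx.plug, Expr.seq.injEq] at h
      obtain ⟨h1, h2⟩ := h
      obtain ⟨h3, h4⟩ := ih Y a a' ha ha' h1
      exact ⟨by rw [h3, h2], h4⟩
    | primArg δ vs Y es => simp [SCtx.plug] at h
    | callee Y es => simp [SCtx.plug] at h
    | callArg v vs Y es => simp [SCtx.plug] at h
  | primArg δ vs X₁ es ih =>
    intro X' a a' ha ha' h
    cases X' with
    | hole =>
      obtain ⟨h1, h2⟩ := atom_plug_eq ha' ha h.symm
      exact absurd h1 (by simp)
    | seq Y e₂ => simp [SCtx.plug] at h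
    | primArg δ' vs' Y es' =>
      simp only [SCtx.plug, Expr.primCall.injEq] at h
      obtain ⟨h1, h2⟩ := h
      obtain ⟨h3, h4, h5⟩ := vals_split vs vs' _ _ es es'
        (plug_atom_nv ha X₁) (plug_atom_nv ha' Y) h2
      obtain ⟨h6, h7⟩ := ih Y a a' ha ha' h4
      exact ⟨by rw [h1, h3, h6, h5], h7⟩
    | callee Y es' => simp [SCtx.plug] at h
    | callArg v vs' Y es' => simp [SCtx.plug] at h
  | callee X₁ es ih =>
    intro X' a a' ha ha' h
    cases X' with
    | hole =>
      obtain ⟨h1, h2⟩ := atom_plug_eq ha' ha h.symm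
      exact absurd h1 (by simp)
    | seq Y e₂ => simp [SCtx.plug] at h
    | primArg δ' vs' Y es' => simp [SCtx.plug] at h
    | callee Y es' =>
      simp only [SCtx.plug, Expr.call.injEq] at h
      obtain ⟨h1, h2⟩ := h
      obtain ⟨h3, h4⟩ := ih Y a a' ha ha' h1
      exact ⟨by rw [h3, h2], h4⟩
    | callArg v vs' Y es' =>
      exfalso
      simp only [SCtx.plug, Expr.call.injEq] at h
      exact plug_atom_nv ha X₁ v h.1
  | callArg v vs X₁ es ih =>
    intro X' a a' ha ha' h
    cases X' with
    | hole =>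
      obtain ⟨h1, h2⟩ := atom_plug_eq ha' ha h.symm
      exact absurd h1 (by simp)
    | seq Y e₂ => simp [SCtx.plug] at h
    | primArg δ' vs' Y es' => simp [SCtx.plug] at h
    | callee Y es' =>
      exfalso
      simp only [SCtx.plug, Expr.call.injEq] at h
      exact plug_atom_nv ha' Y v h.1.symm
    | callArg v' vs' Y es' =>
      simp only [SCtx.plug, Expr.call.injEq] at h
      obtain ⟨h0, h2⟩ := h
      have hv : v = v' := by injection h0
      obtain ⟨h3, h4, h5⟩ := vals_split vs vs' _ _ es es'
        (plug_atom_nv ha X₁) (plug_atom_nv ha' Y) h2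
      obtain ⟨h6, h7⟩ := ih Y a a' ha ha' h4
      exact ⟨by rw [hv, h3, h6, h5], h7⟩

/-- A plugged generic call is never equal to a world context plugged with a
    head. -/
lemma mk_not_w : ∀ (C : WCtx) (X : SCtx) (m : String) (vs : List Val)
    (h : Expr), Head h → SCtx.plug X (mkCall m vs) = C.plug h → False := by
  intro C X m vs h hh heq
  cases C with
  | simple Y =>
    obtain ⟨_, he⟩ := atom_unique X Y _ _ (atom_mkCall m vs) (head_atom hh) heq
    rw [← he] at hh
    obtain ⟨⟨v, hv, hnf⟩, _⟩ := hh
    have : v = .fn m := by injection hv.symm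
    exact hnf m this
  | evalG Y Ci =>
    obtain ⟨_, he⟩ := atom_unique X Y _ _ (atom_mkCall m vs)
      (by trivial : Atom (.evalGlobal (Ci.plug h))) heq
    simp [mkCall] at he
  | evalL Y M Ci =>
    obtain ⟨_, he⟩ := atom_unique X Y _ _ (atom_mkCall m vs)
      (by trivial : Atom (.evalLocal M (Ci.plug h))) heq
    simp [mkCall] at he

lemma headG_false {C : WCtx} {h h' : Expr} (hh : Head h) (hh' : Head h')
    (he : h = .evalGlobal (C.plug h')) : False := by
  subst he
  rcases hh with ⟨v, hv⟩ | ⟨X, m, vs, hx⟩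
  · obtain ⟨_, h2⟩ := wplug_val hv
    exact head_nv hh' v h2
  · exact mk_not_w C X m vs h' hh' hx.symm

lemma headL_false {C : WCtx} {M : Table} {h h' : Expr} (hh : Head h)
    (hh' : Head h') (he : h = .evalLocal M (C.plug h')) : False := by
  subst he
  rcases hh with ⟨v, hv⟩ | ⟨X, m, vs, hx⟩
  · obtain ⟨_, h2⟩ := wplug_val hv
    exact head_nv hh' v h2
  · exact mk_not_w C X m vs h' hh' hx.symm

/-- Unique decomposition for world contexts and heads. -/
lemma head_unique : ∀ (C C' : WCtx) (h h' : Expr), Head h → Head h' →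
    C.plug h = C'.plug h' → C = C' ∧ h = h' := by
  intro C
  induction C with
  | simple X =>
    intro C' h h' hh hh' heq
    cases C' with
    | simple X' =>
      obtain ⟨h1, h2⟩ := atom_unique X X' h h' (head_atom hh) (head_atom hh') heq
      exact ⟨by rw [h1], h2⟩
    | evalG X' C₂ =>
      exfalso
      obtain ⟨_, he⟩ := atom_unique X X' h _ (head_atom hh) (by trivial) heq
      exact headG_false hh hh' he
    | evalL X' M C₂ =>
      exfalso
      obtain ⟨_, he⟩ := atom_unique X X' h _ (head_atom hh) (by trivial) heq
      exact headL_false hh hh' he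
  | evalG X C₁ ih =>
    intro C' h h' hh hh' heq
    cases C' with
    | simple X' =>
      exfalso
      obtain ⟨_, he⟩ := atom_unique X' X h' _ (head_atom hh') (by trivial) heq.symm
      exact headG_false hh' hh he
    | evalG X' C₂ =>
      obtain ⟨h1, h2⟩ := atom_unique X X' _ _ (by trivial : Atom (.evalGlobal (C₁.plug h)))
        (by trivial : Atom (.evalGlobal (C₂.plug h'))) heq
      have h3 : C₁.plug h = C₂.plug h' := by injection h2
      obtain ⟨h4, h5⟩ := ih C₂ h h' hh hh' h3
      exact ⟨by rw [h1, h4], h5⟩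
    | evalL X' M C₂ =>
      exfalso
      obtain ⟨_, h2⟩ := atom_unique X X' _ _ (by trivial : Atom (.evalGlobal (C₁.plug h)))
        (by trivial : Atom (.evalLocal M (C₂.plug h'))) heq
      simp at h2
  | evalL X M C₁ ih =>
    intro C' h h' hh hh' heq
    cases C' with
    | simple X' =>
      exfalso
      obtain ⟨_, he⟩ := atom_unique X' X h' _ (head_atom hh') (by trivial) heq.symm
      exact headL_false hh' hh he
    | evalG X' C₂ =>
      exfalso
      obtain ⟨_, h2⟩ := atom_unique X X' _ _ (by trivial : Atom (.evalLocal M (C₁.plug h)))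
        (by trivial : Atom (.evalGlobal (C₂.plug h'))) heq
      simp at h2
    | evalL X' M' C₂ =>
      obtain ⟨h1, h2⟩ := atom_unique X X' _ _ (by trivial : Atom (.evalLocal M (C₁.plug h)))
        (by trivial : Atom (.evalLocal M' (C₂.plug h'))) heq
      simp only [Expr.evalLocal.injEq] at h2
      obtain ⟨hM, h3⟩ := h2
      obtain ⟨h4, h5⟩ := ih C₂ h h' hh hh' h3
      exact ⟨by rw [hM, h1, h4], h5⟩

lemma splug_inj : ∀ (X : SCtx) (e₁ e₂ : Expr), X.plug e₁ = X.plug e₂ → e₁ = e₂ := by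
  intro X
  induction X with
  | hole => intro e₁ e₂ h; exact h
  | seq X e ih =>
    intro e₁ e₂ h; simp only [SCtx.plug, Expr.seq.injEq] at h; exact ih _ _ h.1
  | primArg δ vs X es ih =>
    intro e₁ e₂ h
    simp only [SCtx.plug, Expr.primCall.injEq, List.append_cancel_left_eq,
      List.cons.injEq] at h
    exact ih _ _ h.2.1
  | callee X es ih =>
    intro e₁ e₂ h; simp only [SCtx.plug, Expr.call.injEq] at h; exact ih _ _ h.1
  | callArg v vs X es ih =>
    intro e₁ e₂ h
    simp only [SCtx.plug, Expr.call.injEq, List.append_cancel_left_eq,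
      List.cons.injEq] at h
    exact ih _ _ h.2.1

lemma wplug_inj : ∀ (C : WCtx) (e₁ e₂ : Expr), C.plug e₁ = C.plug e₂ → e₁ = e₂ := by
  intro C
  induction C with
  | simple X => exact splug_inj X
  | evalG X C ih =>
    intro e₁ e₂ h
    have h1 := splug_inj X _ _ h
    exact ih _ _ (by injection h1)
  | evalL X M C ih =>
    intro e₁ e₂ h
    have h1 := splug_inj X _ _ h
    have h2 : C.plug e₁ = C.plug e₂ := by injection h1
    exact ih _ _ h2

lemma redex_head (r : Redex) : Head r.toExpr := by
  cases r with
  | var x => trivial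
  | seqV v e => exact ⟨v, rfl⟩
  | primC δ vs => exact ⟨vs, rfl⟩
  | callNonFn v vs h => exact ⟨⟨v, rfl, h⟩, vs, rfl⟩
  | mdefR m ps b => trivial
  | globalVal v => exact Or.inl ⟨v, rfl⟩
  | localVal M v => exact Or.inl ⟨v, rfl⟩
  | globalCall X m vs => exact Or.inr ⟨X, m, vs, rfl⟩
  | localCall M X m vs => exact Or.inr ⟨X, m, vs, rfl⟩

lemma step_transfer (Δ : String → List Val → Option Val)
    (C C' : WCtx) (r : Redex) (Mg Mg' : Table) (e' : Expr)
    (hs : Step Δ Mg (C.plug r.toExpr) Mg' (C.plug e')) :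
    Step Δ Mg (C'.plug r.toExpr) Mg' (C'.plug e') := by
  generalize hq : C.plug r.toExpr = q at hs
  generalize hp : C.plug e' = p at hs
  cases hs with
  | seqStep _M D v e =>
    obtain ⟨hC, hr⟩ := head_unique C D _ _ (redex_head r)
      (show Head (.seq (.val v) e) from ⟨v, rfl⟩) hq
    subst hC
    have he : e' = e := wplug_inj C _ _ hp
    rw [hr, he]
    exact Step.seqStep Mg C' v e
  | primStep _M D hΔ =>
    rename_i δ vs v'
    obtain ⟨hC, hr⟩ := head_unique C D _ _ (redex_head r)
      (show Head (.primCall δ (vs.map Expr.val)) from ⟨vs, rfl⟩) hq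
    subst hC
    have he := wplug_inj C _ _ hp
    rw [hr, he]
    exact Step.primStep Mg C' hΔ
  | mdefStep _M D m ps b =>
    obtain ⟨hC, hr⟩ := head_unique C D _ _ (redex_head r)
      (show Head (.mdef m ps b) from trivial) hq
    subst hC
    have he := wplug_inj C _ _ hp
    rw [hr, he]
    exact Step.mdefStep Mg C' m ps b
  | callGlobal _M D X m vs =>
    obtain ⟨hC, hr⟩ := head_unique C D _ _ (redex_head r)
      (show Head (.evalGlobal (X.plug (mkCall m vs))) from Or.inr ⟨X, m, vs, rfl⟩) hq
    subst hC
    have he := wplug_inj C _ _ hp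
    rw [hr, he]
    exact Step.callGlobal Mg C' X m vs
  | callLocal _M D X hmd =>
    rename_i M' m vs md
    obtain ⟨hC, hr⟩ := head_unique C D _ _ (redex_head r)
      (show Head (.evalLocal M' (X.plug (mkCall m vs))) from Or.inr ⟨X, m, vs, rfl⟩) hq
    subst hC
    have he := wplug_inj C _ _ hp
    rw [hr, he]
    exact Step.callLocal Mg C' X hmd
  | valGlobal _M D v =>
    obtain ⟨hC, hr⟩ := head_unique C D _ _ (redex_head r)
      (show Head (.evalGlobal (.val v)) from Or.inl ⟨v, rfl⟩) hq
    subst hC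
    have he := wplug_inj C _ _ hp
    rw [hr, he]
    exact Step.valGlobal Mg C' v
  | valLocal _M M₂ D v =>
    obtain ⟨hC, hr⟩ := head_unique C D _ _ (redex_head r)
      (show Head (.evalLocal M₂ (.val v)) from Or.inl ⟨v, rfl⟩) hq
    subst hC
    have he := wplug_inj C _ _ hp
    rw [hr, he]
    exact Step.valLocal Mg M₂ C' v

lemma err_transfer (Δ : String → List Val → Option Val)
    (C C' : WCtx) (r : Redex) (Mg : Table)
    (hs : StepErr Δ Mg (C.plug r.toExpr)) :
    StepErr Δ Mg (C'.plug r.toExpr) := by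
  generalize hq : C.plug r.toExpr = q at hs
  cases hs with
  | varErr _M D x =>
    obtain ⟨hC, hr⟩ := head_unique C D _ _ (redex_head r)
      (show Head (.var x) from trivial) hq
    rw [hr]
    exact StepErr.varErr Mg C' x
  | primErr _M D hΔ =>
    rename_i δ vs
    obtain ⟨hC, hr⟩ := head_unique C D _ _ (redex_head r)
      (show Head (.primCall δ (vs.map Expr.val)) from ⟨vs, rfl⟩) hq
    rw [hr]
    exact StepErr.primErr Mg C' hΔ
  | calleeErr _M D vs hnf =>
    rename_i v
    obtain ⟨hC, hr⟩ := head_unique C D _ _ (redex_head r)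
      (show Head (.call (.val v) (vs.map Expr.val)) from ⟨⟨v, rfl, hnf⟩, vs, rfl⟩) hq
    rw [hr]
    exact StepErr.calleeErr Mg C' vs hnf
  | callErr _M D X hmd =>
    rename_i M' m vs
    obtain ⟨hC, hr⟩ := head_unique C D _ _ (redex_head r)
      (show Head (.evalLocal M' (X.plug (mkCall m vs))) from Or.inr ⟨X, m, vs, rfl⟩) hq
    rw [hr]
    exact StepErr.callErr Mg C' X hmd

/-- Context Irrelevance. -/
theorem context_irrelevance (Δ : String → List Val → Option Val)
    (C C' : WCtx) (r : Redex) (Mg Mg' : Table) :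
    (∀ e' : Expr,
        Step Δ Mg (C.plug r.toExpr) Mg' (C.plug e') ↔
        Step Δ Mg (C'.plug r.toExpr) Mg' (C'.plug e')) ∧
    (StepErr Δ Mg (C.plug r.toExpr) ↔ StepErr Δ Mg (C'.plug r.toExpr)) := by
  refine ⟨fun e' => ⟨step_transfer Δ C C' r Mg Mg' e', step_transfer Δ C' C r Mg Mg' e'⟩,
    err_transfer Δ C C' r Mg, err_transfer Δ C' C r Mg⟩

end Juliette
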